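/- Let Σ and Δ be complete (or convex-support) simplicial rational fans in N_ℝ with |Σ| = |Δ|, with chosen lattice points b_i (on rays of Σ) and b'_j (on rays of Δ), and associated functions ψ_Σ, ψ_Δ with ψ_Σ(b_i) = 1, ψ_Δ(b'_j) = 1. Let λ be piecewise ℚ-linear with respect to Σ with λ(b_i) > −1, and set λ' = λ + ψ_Σ − ψ_Δ. If λ' is piecewise ℚ-linear with respect to Δ and λ'(b'_j) > −1 for all j, then the weighted δ-vectors agree: δ^λ_Σ(t) = δ^{λ'}_Δ(t). -/
import Mathlib


open scoped Classical

/-- The cone spanned by the rays indexed by `σ`. -/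
def coneOf (d r : ℕ) (v : Fin r → Fin d → ℤ) (σ : Finset (Fin r)) : Set (Fin d → ℝ) :=
  {x | ∃ c : Fin r → ℝ, (∀ i, 0 ≤ c i) ∧ (∀ i ∉ σ, c i = 0) ∧
    ∀ j, x j = ∑ i, c i * (v i j : ℝ)}

/-- The monomial `t^e` with rational exponent, as a Hahn series. -/
noncomputable def tpow (e : ℚ) : HahnSeries ℚ ℚ := HahnSeries.single e 1

/-- Build a Hahn series from a coefficient function (junk value `0` if not well-founded). -/
noncomputable def mkHahn (c : ℚ → ℚ) : HahnSeries ℚ ℚ :=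
  if h : (Function.support c).IsPWO then ⟨c, h⟩ else 0

/-- Coefficients of `1 + ∑_{m ≥ 1} ∑_{v ∈ mQ ∩ N} t^{ψ(v)-⌈ψ(v)⌉+λ(v)+m}`, the series
defining the weighted δ-vector `δ^λ_Σ(t)` (before multiplying by `(1-t)^{d+1}`). -/
noncomputable def deltaCoeff (d r : ℕ) (v : Fin r → Fin d → ℤ)
    (cones : Finset (Finset (Fin r))) (ψ lam : (Fin d → ℝ) → ℝ) : ℚ → ℚ := fun e =>
  (if e = 0 then 1 else 0) +
  (Set.ncard {p : ℕ × (Fin d → ℤ) |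
    1 ≤ p.1 ∧ (∃ σ ∈ cones, (fun j => (p.2 j : ℝ)) ∈ coneOf d r v σ) ∧
    ψ (fun j => (p.2 j : ℝ)) ≤ (p.1 : ℝ) ∧
    ψ (fun j => (p.2 j : ℝ)) - ⌈ψ (fun j => (p.2 j : ℝ))⌉
      + lam (fun j => (p.2 j : ℝ)) + (p.1 : ℝ) = (e : ℝ)} : ℚ)

lemma psi_sign {d r : ℕ} (v : Fin r → Fin d → ℤ) (cones : Finset (Finset (Fin r)))
    (a : Fin r → ℕ) (ha : ∀ i, 0 < a i) (ψ : (Fin d → ℝ) → ℝ)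
    (hlin : ∀ σ ∈ cones, ∃ ℓ : (Fin d → ℝ) →ₗ[ℝ] ℝ, ∀ x ∈ coneOf d r v σ, ψ x = ℓ x)
    (hb : ∀ i, ψ (fun j => (a i : ℝ) * (v i j : ℝ)) = 1)
    {x : Fin d → ℝ} (hx : ∃ σ ∈ cones, x ∈ coneOf d r v σ) :
    (x = 0 → ψ x = 0) ∧ (x ≠ 0 → 0 < ψ x) := by
  obtain ⟨σ, hσ, hmem⟩ := hx
  obtain ⟨ℓ, hℓ⟩ := hlin σ hσ
  obtain ⟨c, hc0, hcz, hcx⟩ := hmem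
  have hψx : ψ x = ℓ x := hℓ x ⟨c, hc0, hcz, hcx⟩
  constructor
  · rintro rfl; rw [hψx, map_zero]
  · intro hx0
    have hray : ∀ i ∈ σ, ℓ (fun j => (v i j : ℝ)) = 1 / (a i : ℝ) := by
      intro i hi
      have hmem' : (fun j => (a i : ℝ) * (v i j : ℝ)) ∈ coneOf d r v σ := by
        refine ⟨fun i' => if i' = i then (a i : ℝ) else 0, ?_, ?_, ?_⟩
        · intro i'; dsimp only; split <;> positivity
        · intro i' hi'; simp only [ite_eq_right_iff]; rintro rfl; exact absurd hi hi'
        · intro j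
          rw [Finset.sum_eq_single i (by intro b _ hb'; simp [hb']) (by simp)]
          simp
      have h1 : ℓ (fun j => (a i : ℝ) * (v i j : ℝ)) = 1 := by
        rw [← hℓ _ hmem', hb i]
      have hsmul : (fun j => (a i : ℝ) * (v i j : ℝ))
          = (a i : ℝ) • (fun j => (v i j : ℝ)) := rfl
      rw [hsmul, map_smul, smul_eq_mul] at h1
      have hai : (0:ℝ) < (a i : ℝ) := by exact_mod_cast ha i
      field_simp
      linarith
    have hxsum : x = ∑ i, c i • (fun j => (v i j : ℝ)) := by
      funext j
      rw [Finset.sum_apply]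
      simpa using hcx j
    have hℓx : ℓ x = ∑ i, c i * ℓ (fun j => (v i j : ℝ)) := by
      rw [hxsum, map_sum]
      simp [map_smul]
    obtain ⟨j, hj⟩ : ∃ j, x j ≠ 0 := Function.ne_iff.mp hx0
    have hsum : (∑ i, c i * (v i j : ℝ)) ≠ 0 := by rw [← hcx j]; exact hj
    obtain ⟨i, _, hi⟩ := Finset.exists_ne_zero_of_sum_ne_zero hsum
    have hci : 0 < c i := lt_of_le_of_ne (hc0 i) (by
      intro h; exact hi (by rw [← h]; ring))
    have hiσ : i ∈ σ := by
      by_contra h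
      exact hi (by rw [hcz i h]; ring)
    rw [hψx, hℓx]
    refine Finset.sum_pos' (fun k _ => ?_) ⟨i, Finset.mem_univ i, ?_⟩
    · rcases eq_or_ne (c k) 0 with h | h
      · simp [h]
      · have hkσ : k ∈ σ := by by_contra hk; exact h (hcz k hk)
        rw [hray k hkσ]
        have hk0 : (0:ℝ) < (a k : ℝ) := by exact_mod_cast ha k
        exact mul_nonneg (hc0 k) (by positivity)
    · rw [hray i hiσ]
      have : (0:ℝ) < (a i : ℝ) := by exact_mod_cast ha i
      positivity

def deltaSet (d : ℕ) (P : (Fin d → ℤ) → Prop) (ψ lam : (Fin d → ℝ) → ℝ) (e : ℚ) :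
    Set (ℕ × (Fin d → ℤ)) :=
  {p | 1 ≤ p.1 ∧ P p.2 ∧
    ψ (fun j => (p.2 j : ℝ)) ≤ (p.1 : ℝ) ∧
    ψ (fun j => (p.2 j : ℝ)) - ⌈ψ (fun j => (p.2 j : ℝ))⌉
      + lam (fun j => (p.2 j : ℝ)) + (p.1 : ℝ) = (e : ℝ)}

/-- The shift map between the two counted sets. -/
noncomputable def deltaMap (d : ℕ) (ψa ψb : (Fin d → ℝ) → ℝ) :
    ℕ × (Fin d → ℤ) → ℕ × (Fin d → ℤ) := fun p =>
  (((p.1 : ℤ) - ⌈ψa (fun j => (p.2 j : ℝ))⌉ + ⌈ψb (fun j => (p.2 j : ℝ))⌉).toNat, p.2)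

lemma deltaMap_mapsTo {d : ℕ} {Pa Pb : (Fin d → ℤ) → Prop}
    {ψa ψb lama lamb : (Fin d → ℝ) → ℝ}
    (hP : ∀ w, Pa w ↔ Pb w)
    (hsa : ∀ w : Fin d → ℤ, Pa w →
      (((fun j => (w j : ℝ)) = 0 → ψa (fun j => (w j : ℝ)) = 0) ∧
       ((fun j => (w j : ℝ)) ≠ 0 → 0 < ψa (fun j => (w j : ℝ)))))
    (hsb : ∀ w : Fin d → ℤ, Pa w →
      (((fun j => (w j : ℝ)) = 0 → ψb (fun j => (w j : ℝ)) = 0) ∧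
       ((fun j => (w j : ℝ)) ≠ 0 → 0 < ψb (fun j => (w j : ℝ)))))
    (hab : ∀ w : Fin d → ℤ, Pa w →
      lamb (fun j => (w j : ℝ)) = lama (fun j => (w j : ℝ))
        + ψa (fun j => (w j : ℝ)) - ψb (fun j => (w j : ℝ)))
    (e : ℚ) :
    Set.MapsTo (deltaMap d ψa ψb) (deltaSet d Pa ψa lama e) (deltaSet d Pb ψb lamb e) := by
  rintro ⟨m, w⟩ ⟨hm, hPw, hle, hexp⟩
  set x : Fin d → ℝ := fun j => (w j : ℝ) with hxdef
  set n : ℤ := ⌈ψa x⌉ with hndef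
  set n' : ℤ := ⌈ψb x⌉ with hn'def
  have hn : n ≤ (m : ℤ) := Int.ceil_le.mpr (by exact_mod_cast hle)
  have hcase : (n = 0 ∧ n' = 0) ∨ (1 ≤ n ∧ 1 ≤ n') := by
    rcases eq_or_ne x 0 with h0 | h0
    · left
      constructor
      · rw [hndef, (hsa w hPw).1 h0, Int.ceil_zero]
      · rw [hn'def, (hsb w hPw).1 h0, Int.ceil_zero]
    · exact Or.inr ⟨Int.ceil_pos.mpr ((hsa w hPw).2 h0), Int.ceil_pos.mpr ((hsb w hPw).2 h0)⟩
  have hm' : (1 : ℤ) ≤ (m : ℤ) := by exact_mod_cast hm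
  have hnn : (0 : ℤ) ≤ (m : ℤ) - n + n' := by omega
  have hcast : ((((m : ℤ) - n + n').toNat : ℕ) : ℤ) = (m : ℤ) - n + n' :=
    Int.toNat_of_nonneg hnn
  have hr : ((((m : ℤ) - n + n').toNat : ℕ) : ℝ) = (m : ℝ) - (n : ℝ) + (n' : ℝ) := by
    exact_mod_cast congrArg (fun z : ℤ => (z : ℝ)) hcast
  have himg : deltaMap d ψa ψb (m, w) = (((m : ℤ) - n + n').toNat, w) := rfl
  rw [himg]
  refine ⟨?_, (hP w).mp hPw, ?_, ?_⟩
  · show 1 ≤ ((m : ℤ) - n + n').toNat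
    omega
  · show ψb x ≤ (((((m : ℤ) - n + n').toNat : ℕ)) : ℝ)
    have h1 : ψb x ≤ (n' : ℝ) := Int.le_ceil _
    have h2 : (n' : ℝ) ≤ (m : ℝ) - n + n' := by
      have : (n : ℝ) ≤ (m : ℝ) := by exact_mod_cast hn
      linarith
    rw [hr]; linarith
  · show ψb x - (⌈ψb x⌉ : ℝ) + lamb x + (((((m : ℤ) - n + n').toNat : ℕ)) : ℝ) = (e : ℝ)
    rw [← hn'def, hr, hab w hPw]
    have hexp' : ψa x - (n : ℝ) + lama x + (m : ℝ) = (e : ℝ) := hexp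
    linarith

lemma deltaSet_ncard_eq {d : ℕ} {Pa Pb : (Fin d → ℤ) → Prop}
    {ψa ψb lama lamb : (Fin d → ℝ) → ℝ}
    (hP : ∀ w, Pa w ↔ Pb w)
    (hsa : ∀ w : Fin d → ℤ, Pa w →
      (((fun j => (w j : ℝ)) = 0 → ψa (fun j => (w j : ℝ)) = 0) ∧
       ((fun j => (w j : ℝ)) ≠ 0 → 0 < ψa (fun j => (w j : ℝ)))))
    (hsb : ∀ w : Fin d → ℤ, Pa w →
      (((fun j => (w j : ℝ)) = 0 → ψb (fun j => (w j : ℝ)) = 0) ∧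
       ((fun j => (w j : ℝ)) ≠ 0 → 0 < ψb (fun j => (w j : ℝ)))))
    (hab : ∀ w : Fin d → ℤ, Pa w →
      lamb (fun j => (w j : ℝ)) = lama (fun j => (w j : ℝ))
        + ψa (fun j => (w j : ℝ)) - ψb (fun j => (w j : ℝ)))
    (e : ℚ) :
    (deltaSet d Pa ψa lama e).ncard = (deltaSet d Pb ψb lamb e).ncard := by
  have hmaps := deltaMap_mapsTo hP hsa hsb hab e
  have hmaps' := deltaMap_mapsTo (Pa := Pb) (Pb := Pa) (ψa := ψb) (ψb := ψa)
      (lama := lamb) (lamb := lama) (fun w => (hP w).symm)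
      (fun w hw => hsb w ((hP w).mpr hw)) (fun w hw => hsa w ((hP w).mpr hw))
      (fun w hw => by have := hab w ((hP w).mpr hw); linarith) e
  have hbij : Set.BijOn (deltaMap d ψa ψb) (deltaSet d Pa ψa lama e)
      (deltaSet d Pb ψb lamb e) := by
    refine Set.InvOn.bijOn ⟨?_, ?_⟩ hmaps hmaps'
    · rintro ⟨m, w⟩ ⟨hm, hPw, hle, _⟩
      set x : Fin d → ℝ := fun j => (w j : ℝ) with hxdef
      set n : ℤ := ⌈ψa x⌉ with hndef
      set n' : ℤ := ⌈ψb x⌉ with hn'def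
      have hn : n ≤ (m : ℤ) := Int.ceil_le.mpr (by exact_mod_cast hle)
      have hcase : (n = 0 ∧ n' = 0) ∨ (1 ≤ n ∧ 1 ≤ n') := by
        rcases eq_or_ne x 0 with h0 | h0
        · left
          constructor
          · rw [hndef, (hsa w hPw).1 h0, Int.ceil_zero]
          · rw [hn'def, (hsb w hPw).1 h0, Int.ceil_zero]
        · exact Or.inr ⟨Int.ceil_pos.mpr ((hsa w hPw).2 h0),
            Int.ceil_pos.mpr ((hsb w hPw).2 h0)⟩
      have hm' : (1 : ℤ) ≤ (m : ℤ) := by exact_mod_cast hm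
      have heq : deltaMap d ψb ψa (deltaMap d ψa ψb (m, w))
          = ((((((m : ℤ) - n + n').toNat : ℕ) : ℤ) - n' + n).toNat, w) := rfl
      rw [heq]
      refine Prod.ext ?_ rfl
      show ((((((m : ℤ) - n + n').toNat : ℕ) : ℤ) - n' + n).toNat) = m
      omega
    · rintro ⟨m, w⟩ ⟨hm, hPw, hle, _⟩
      have hPw' : Pa w := (hP w).mpr hPw
      set x : Fin d → ℝ := fun j => (w j : ℝ) with hxdef
      set n : ℤ := ⌈ψa x⌉ with hndef
      set n' : ℤ := ⌈ψb x⌉ with hn'def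
      have hn : n' ≤ (m : ℤ) := Int.ceil_le.mpr (by exact_mod_cast hle)
      have hcase : (n = 0 ∧ n' = 0) ∨ (1 ≤ n ∧ 1 ≤ n') := by
        rcases eq_or_ne x 0 with h0 | h0
        · left
          constructor
          · rw [hndef, (hsa w hPw').1 h0, Int.ceil_zero]
          · rw [hn'def, (hsb w hPw').1 h0, Int.ceil_zero]
        · exact Or.inr ⟨Int.ceil_pos.mpr ((hsa w hPw').2 h0),
            Int.ceil_pos.mpr ((hsb w hPw').2 h0)⟩
      have hm' : (1 : ℤ) ≤ (m : ℤ) := by exact_mod_cast hm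
      have heq : deltaMap d ψa ψb (deltaMap d ψb ψa (m, w))
          = ((((((m : ℤ) - n' + n).toNat : ℕ) : ℤ) - n + n').toNat, w) := rfl
      rw [heq]
      refine Prod.ext ?_ rfl
      show ((((((m : ℤ) - n' + n).toNat : ℕ) : ℤ) - n + n').toNat) = m
      omega
  rw [← hbij.image_eq, Set.ncard_image_of_injOn hbij.injOn]

/-- Let `Σ` and `Δ` be simplicial rational fans in `N_ℝ` with convex common
support `|Σ| = |Δ|`, with chosen lattice points `b_i = a_i v_i` (rays of `Σ`) and
`b'_j = a'_j v'_j` (rays of `Δ`), and associated functions `ψ_Σ`, `ψ_Δ`.  Let `λ` be piecewise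
`ℚ`-linear with respect to `Σ` with `λ(b_i) > -1` and set `λ' = λ + ψ_Σ - ψ_Δ`.  If `λ'` is
piecewise `ℚ`-linear with respect to `Δ` and `λ'(b'_j) > -1` for all `j`, then the weighted
δ-vectors agree: `δ^λ_Σ(t) = δ^{λ'}_Δ(t)`. -/
theorem stmt_15 (d r₁ r₂ : ℕ)
    (v₁ : Fin r₁ → Fin d → ℤ) (v₂ : Fin r₂ → Fin d → ℤ)
    (cones₁ : Finset (Finset (Fin r₁))) (cones₂ : Finset (Finset (Fin r₂)))
    (hdown₁ : ∀ σ ∈ cones₁, ∀ τ ⊆ σ, τ ∈ cones₁)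
    (hdown₂ : ∀ σ ∈ cones₂, ∀ τ ⊆ σ, τ ∈ cones₂)
    (hindep₁ : ∀ σ ∈ cones₁, LinearIndependent ℝ (fun i : σ => fun j => (v₁ i j : ℝ)))
    (hindep₂ : ∀ σ ∈ cones₂, LinearIndependent ℝ (fun i : σ => fun j => (v₂ i j : ℝ)))
    (hfan₁ : ∀ σ ∈ cones₁, ∀ τ ∈ cones₁,
      coneOf d r₁ v₁ σ ∩ coneOf d r₁ v₁ τ = coneOf d r₁ v₁ (σ ∩ τ))
    (hfan₂ : ∀ σ ∈ cones₂, ∀ τ ∈ cones₂,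
      coneOf d r₂ v₂ σ ∩ coneOf d r₂ v₂ τ = coneOf d r₂ v₂ (σ ∩ τ))
    -- equal convex supports
    (hsupp : (⋃ σ ∈ cones₁, coneOf d r₁ v₁ σ) = ⋃ σ ∈ cones₂, coneOf d r₂ v₂ σ)
    (hconvex : Convex ℝ (⋃ σ ∈ cones₁, coneOf d r₁ v₁ σ))
    (a₁ : Fin r₁ → ℕ) (ha₁ : ∀ i, 0 < a₁ i)
    (a₂ : Fin r₂ → ℕ) (ha₂ : ∀ i, 0 < a₂ i)
    (ψ₁ ψ₂ lam : (Fin d → ℝ) → ℝ)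
    (hψ₁lin : ∀ σ ∈ cones₁, ∃ ℓ : (Fin d → ℝ) →ₗ[ℝ] ℝ, ∀ x ∈ coneOf d r₁ v₁ σ, ψ₁ x = ℓ x)
    (hψ₁b : ∀ i, ψ₁ (fun j => (a₁ i : ℝ) * (v₁ i j : ℝ)) = 1)
    (hψ₂lin : ∀ σ ∈ cones₂, ∃ ℓ : (Fin d → ℝ) →ₗ[ℝ] ℝ, ∀ x ∈ coneOf d r₂ v₂ σ, ψ₂ x = ℓ x)
    (hψ₂b : ∀ i, ψ₂ (fun j => (a₂ i : ℝ) * (v₂ i j : ℝ)) = 1)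
    (hlamlin : ∀ σ ∈ cones₁, ∃ ℓ : (Fin d → ℝ) →ₗ[ℝ] ℝ, ∀ x ∈ coneOf d r₁ v₁ σ, lam x = ℓ x)
    (hlamb : ∀ i, -1 < lam (fun j => (a₁ i : ℝ) * (v₁ i j : ℝ)))
    -- `λ' = λ + ψ_Σ - ψ_Δ` is piecewise `ℚ`-linear with respect to `Δ` …
    (hlam'lin : ∀ σ ∈ cones₂, ∃ ℓ : (Fin d → ℝ) →ₗ[ℝ] ℝ,
      ∀ x ∈ coneOf d r₂ v₂ σ, lam x + ψ₁ x - ψ₂ x = ℓ x)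
    -- … and satisfies `λ'(b'_j) > -1`
    (hlam'b : ∀ i, -1 < lam (fun j => (a₂ i : ℝ) * (v₂ i j : ℝ))
      + ψ₁ (fun j => (a₂ i : ℝ) * (v₂ i j : ℝ))
      - ψ₂ (fun j => (a₂ i : ℝ) * (v₂ i j : ℝ)))
    (hrat : ∀ w : Fin d → ℤ, ∃ c : ℚ,
      ψ₁ (fun j => (w j : ℝ)) + lam (fun j => (w j : ℝ)) = (c : ℝ)) :
    (1 - tpow 1) ^ (d + 1) * mkHahn (deltaCoeff d r₁ v₁ cones₁ ψ₁ lam)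
      = (1 - tpow 1) ^ (d + 1) *
          mkHahn (deltaCoeff d r₂ v₂ cones₂ ψ₂
            (fun x => lam x + ψ₁ x - ψ₂ x)) := by
  have hPiff : ∀ x : Fin d → ℝ,
      (∃ σ ∈ cones₁, x ∈ coneOf d r₁ v₁ σ) ↔ (∃ σ ∈ cones₂, x ∈ coneOf d r₂ v₂ σ) := by
    intro x
    have h := Set.ext_iff.mp hsupp x
    simpa [Set.mem_iUnion] using h
  have key : deltaCoeff d r₁ v₁ cones₁ ψ₁ lam
      = deltaCoeff d r₂ v₂ cones₂ ψ₂ (fun x => lam x + ψ₁ x - ψ₂ x) := by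
    funext e
    have h := deltaSet_ncard_eq (d := d)
      (Pa := fun w : Fin d → ℤ => ∃ σ ∈ cones₁, (fun j => (w j : ℝ)) ∈ coneOf d r₁ v₁ σ)
      (Pb := fun w : Fin d → ℤ => ∃ σ ∈ cones₂, (fun j => (w j : ℝ)) ∈ coneOf d r₂ v₂ σ)
      (ψa := ψ₁) (ψb := ψ₂) (lama := lam) (lamb := fun x => lam x + ψ₁ x - ψ₂ x)
      (fun w => hPiff _)
      (fun w hw => psi_sign v₁ cones₁ a₁ ha₁ ψ₁ hψ₁lin hψ₁b hw)
      (fun w hw => psi_sign v₂ cones₂ a₂ ha₂ ψ₂ hψ₂lin hψ₂b ((hPiff _).mp hw))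
      (fun w _ => rfl) e
    simp only [deltaCoeff]
    congr 1
    exact_mod_cast h
  rw [key]
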